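/- Let k be a field, let E be a nonempty finite subset of ℕ^n, and let 𝔞 be the ideal of the polynomial ring k[x_1, …, x_n] generated by the monomials x^e with e ∈ E. Then for v ∈ ℕ^n the following are equivalent: (i) the monomial x^v is integral over 𝔞, i.e. there exist an integer N ≥ 1 and polynomials a_1, …, a_N with a_i ∈ 𝔞^i for each i and (x^v)^N + a_1·(x^v)^{N−1} + … + a_{N−1}·x^v + a_N = 0; (ii) v ∈ convexHull(⋃_{e ∈ E} (e + ℕ^n)), the convex hull being taken in ℝ^n. -/

import Mathlib

open Pointwise

namespace Stmt12Aux

open MvPolynomial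



variable {n : ℕ} {k : Type*} [Field k]

/-- exponents of products of `i` generators -/
def expSet (E : Finset (Fin n → ℕ)) (i : ℕ) : Set (Fin n →₀ ℕ) :=
  {d | ∃ m : Multiset (Fin n → ℕ), (∀ x ∈ m, x ∈ E) ∧ Multiset.card m = i ∧
    (m.map (fun e => Finsupp.equivFunOnFinite.symm e)).sum = d}

theorem span_pow_eq (E : Finset (Fin n → ℕ)) (i : ℕ) :
    (Ideal.span ((fun e : Fin n → ℕ => monomial (Finsupp.equivFunOnFinite.symm e) (1 : k)) ''
        (E : Set (Fin n → ℕ)))) ^ i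
      = Ideal.span ((fun d => monomial d (1 : k)) '' expSet E i) := by
  induction i with
  | zero =>
      have h0 : expSet (n := n) E 0 = {0} := by
        ext d
        simp only [expSet, Set.mem_setOf_eq, Set.mem_singleton_iff]
        constructor
        · rintro ⟨m, -, hm, rfl⟩
          rw [Multiset.card_eq_zero] at hm
          subst hm; simp
        · rintro rfl
          exact ⟨0, by simp, by simp, by simp⟩
      rw [pow_zero, h0]
      simp [Ideal.one_eq_top, Ideal.span_singleton_one]
  | succ i ih =>
      rw [pow_succ, ih, Ideal.span_mul_span']
      congr 1
      ext p
      simp only [Set.mem_mul, Set.mem_image, expSet, Set.mem_setOf_eq]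
      constructor
      · rintro ⟨x, ⟨d, ⟨m, hmE, hmc, rfl⟩, rfl⟩, y, ⟨e, he, rfl⟩, rfl⟩
        refine ⟨_, ⟨e ::ₘ m, ?_, by simp [hmc], rfl⟩, ?_⟩
        · intro x hx
          rcases Multiset.mem_cons.mp hx with h | h
          · subst h; exact he
          · exact hmE x h
        · simp [monomial_mul, add_comm]
      · rintro ⟨d, ⟨m, hmE, hmc, rfl⟩, rfl⟩
        have hm0 : m ≠ 0 := by
          intro h; subst h; simp at hmc
        obtain ⟨e, he⟩ := Multiset.exists_mem_of_ne_zero hm0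
        have hc := Multiset.cons_erase he
        refine ⟨monomial ((m.erase e).map (fun e => Finsupp.equivFunOnFinite.symm e)).sum 1,
          ⟨_, ⟨m.erase e, fun x hx => hmE x (Multiset.mem_of_mem_erase hx), ?_, rfl⟩, rfl⟩,
          monomial (Finsupp.equivFunOnFinite.symm e) 1, ⟨e, hmE e he, rfl⟩, ?_⟩
        · rw [Multiset.card_erase_of_mem he, hmc]; rfl
        · rw [monomial_mul, one_mul]
          congr 1
          conv_rhs => rw [← hc]
          simp [Multiset.sum_cons, add_comm]

theorem mem_pow_iff (E : Finset (Fin n → ℕ)) (i : ℕ) (p : MvPolynomial (Fin n) k) :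
    p ∈ (Ideal.span ((fun e : Fin n → ℕ => monomial (Finsupp.equivFunOnFinite.symm e) (1 : k)) ''
        (E : Set (Fin n → ℕ)))) ^ i ↔ ∀ μ ∈ p.support, ∃ d ∈ expSet E i, d ≤ μ := by
  rw [span_pow_eq]
  exact mem_ideal_span_monomial_image


def Q (E : Finset (Fin n → ℕ)) (v : Fin n → ℕ) : Prop :=
  ∃ N : ℕ, 1 ≤ N ∧ ∃ m : Multiset (Fin n → ℕ), (∀ x ∈ m, x ∈ E) ∧ Multiset.card m = N ∧
    ∀ j, (m.map (fun e => e j)).sum ≤ N * v j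

theorem msum_apply (m : Multiset (Fin n → ℕ)) (j : Fin n) :
    ((m.map (fun e => (Finsupp.equivFunOnFinite.symm e : Fin n →₀ ℕ))).sum) j
      = (m.map (fun e => e j)).sum := by
  induction m using Multiset.induction_on with
  | empty => simp
  | cons a s ih => simp [ih]

theorem smul_symm_apply (M : ℕ) (v : Fin n → ℕ) (j : Fin n) :
    (M • (Finsupp.equivFunOnFinite.symm v : Fin n →₀ ℕ)) j = M * v j := by
  simp

theorem ex_to_Q (E : Finset (Fin n → ℕ)) (v : Fin n → ℕ)
    (h : ∃ N : ℕ, 1 ≤ N ∧ ∃ a : ℕ → MvPolynomial (Fin n) k,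
      (∀ i, 1 ≤ i → i ≤ N → a i ∈ (Ideal.span ((fun e : Fin n → ℕ =>
        monomial (Finsupp.equivFunOnFinite.symm e) (1 : k)) '' (E : Set (Fin n → ℕ)))) ^ i) ∧
      (monomial (Finsupp.equivFunOnFinite.symm v) (1 : k)) ^ N +
        ∑ i ∈ Finset.Icc 1 N,
          a i * (monomial (Finsupp.equivFunOnFinite.symm v) (1 : k)) ^ (N - i) = 0) :
    Q E v := by
  classical
  obtain ⟨N, hN, a, ha, heq⟩ := h
  set v' : Fin n →₀ ℕ := Finsupp.equivFunOnFinite.symm v with hv'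
  have hXpow : ∀ M : ℕ, (monomial v' (1 : k)) ^ M = monomial (M • v') 1 := by
    intro M; rw [monomial_pow, one_pow]
  have h0 : coeff (N • v') ((monomial v' (1 : k)) ^ N +
      ∑ i ∈ Finset.Icc 1 N, a i * (monomial v' (1 : k)) ^ (N - i)) = 0 := by
    rw [heq]; simp
  rw [coeff_add, coeff_sum] at h0
  have hc1 : coeff (N • v') ((monomial v' (1 : k)) ^ N) = 1 := by
    rw [hXpow, coeff_monomial, if_pos rfl]
  have hterm : ∀ i ∈ Finset.Icc 1 N,
      coeff (N • v') (a i * (monomial v' (1 : k)) ^ (N - i)) = coeff (i • v') (a i) := by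
    intro i hi
    obtain ⟨hi1, hiN⟩ := Finset.mem_Icc.mp hi
    rw [hXpow, coeff_mul_monomial']
    have hle : (N - i) • v' ≤ N • v' := by
      rw [Finsupp.le_def]
      intro j
      simp only [Finsupp.smul_apply, smul_eq_mul]
      exact Nat.mul_le_mul_right _ (Nat.sub_le _ _)
    rw [if_pos hle, mul_one]
    congr 1
    ext j
    simp only [Finsupp.tsub_apply, Finsupp.smul_apply, smul_eq_mul]
    rw [← Nat.sub_mul, Nat.sub_sub_self hiN]
  rw [Finset.sum_congr rfl hterm, hc1] at h0
  have hex : ∃ i ∈ Finset.Icc 1 N, coeff (i • v') (a i) ≠ 0 := by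
    by_contra hall
    push_neg at hall
    rw [Finset.sum_eq_zero hall, add_zero] at h0
    exact one_ne_zero h0
  obtain ⟨i, hi, hco⟩ := hex
  obtain ⟨hi1, hiN⟩ := Finset.mem_Icc.mp hi
  obtain ⟨d, hd, hdle⟩ := (mem_pow_iff E i (a i)).mp (ha i hi1 hiN) _ (mem_support_iff.mpr hco)
  obtain ⟨m, hmE, hmc, hmsum⟩ := hd
  refine ⟨i, hi1, m, hmE, hmc, fun j => ?_⟩
  have h3 := Finsupp.le_def.mp hdle j
  rw [← hmsum, msum_apply] at h3
  simpa [hv'] using h3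

theorem Q_to_ex (E : Finset (Fin n → ℕ)) (v : Fin n → ℕ) (h : Q E v) :
    ∃ N : ℕ, 1 ≤ N ∧ ∃ a : ℕ → MvPolynomial (Fin n) k,
      (∀ i, 1 ≤ i → i ≤ N → a i ∈ (Ideal.span ((fun e : Fin n → ℕ =>
        monomial (Finsupp.equivFunOnFinite.symm e) (1 : k)) '' (E : Set (Fin n → ℕ)))) ^ i) ∧
      (monomial (Finsupp.equivFunOnFinite.symm v) (1 : k)) ^ N +
        ∑ i ∈ Finset.Icc 1 N,
          a i * (monomial (Finsupp.equivFunOnFinite.symm v) (1 : k)) ^ (N - i) = 0 := by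
  classical
  obtain ⟨N, hN1, m, hmE, hmc, hle⟩ := h
  set v' : Fin n →₀ ℕ := Finsupp.equivFunOnFinite.symm v with hv'
  set P : MvPolynomial (Fin n) k := monomial (N • v') 1 with hP
  have hPmem : P ∈ (Ideal.span ((fun e : Fin n → ℕ =>
      monomial (Finsupp.equivFunOnFinite.symm e) (1 : k)) '' (E : Set (Fin n → ℕ)))) ^ N := by
    rw [mem_pow_iff]
    intro μ hμ
    rw [hP, support_monomial, if_neg (one_ne_zero)] at hμ
    rw [Finset.mem_singleton] at hμ
    subst hμ
    refine ⟨(m.map (fun e => Finsupp.equivFunOnFinite.symm e)).sum,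
      ⟨m, hmE, hmc, rfl⟩, ?_⟩
    rw [Finsupp.le_def]
    intro j
    rw [msum_apply]
    simpa [hv'] using hle j
  refine ⟨N, hN1, fun i => if i = N then -P else 0, ?_, ?_⟩
  · intro i h1 h2
    by_cases hi : i = N
    · subst hi
      simp only [if_pos rfl]
      exact neg_mem hPmem
    · simp only [if_neg hi]
      exact zero_mem _
  · have hXpow : (monomial v' (1 : k)) ^ N = P := by
      rw [monomial_pow, one_pow, hP]
    rw [Finset.sum_eq_single_of_mem N (Finset.mem_Icc.mpr ⟨hN1, le_refl N⟩)
      (fun i _ hi => by simp [if_neg hi])]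
    simp [hXpow]


end Stmt12Aux



theorem rat_weights {n : ℕ} {ι : Type*} [Fintype ι] (zn : ι → (Fin n → ℕ)) (v : Fin n → ℕ)
    (w : ι → ℝ)
    (hAI : AffineIndependent ℝ (fun i => (fun j => (zn i j : ℝ)) : ι → (Fin n → ℝ)))
    (hw1 : ∑ i, w i = 1)
    (hc : ∑ i, w i • (fun j => (zn i j : ℝ)) = (fun j => (v j : ℝ))) :
    ∃ q : ι → ℚ, ∀ i, w i = (q i : ℝ) := by
  classical
  have hli : ∀ c : ι → ℝ, ∑ i, c i = 0 → (∀ j, ∑ i, c i * (zn i j : ℝ) = 0) →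
      ∀ i, c i = 0 := by
    intro c hc0 hcj
    refine (affineIndependent_iff_of_fintype ℝ _).mp hAI c hc0 ?_
    rw [Finset.weightedVSub_eq_linear_combination _ hc0]
    funext j
    simpa [Finset.sum_apply] using hcj j
  set u : ι → Fin (n + 1) → ℚ := fun i => Fin.cons 1 (fun j => (zn i j : ℚ)) with hu
  set b : Fin (n + 1) → ℚ := Fin.cons 1 (fun j => (v j : ℚ)) with hb
  set G : Matrix ι ι ℚ := Matrix.of (fun i i' => ∑ t, u i t * u i' t) with hG
  have key : ∀ t, ∑ i, w i * ((u i t : ℚ) : ℝ) = ((b t : ℚ) : ℝ) := by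
    intro t
    refine Fin.cases ?_ ?_ t
    · simp [hu, hb, hw1]
    · intro j
      have := congrFun hc j
      simp only [Finset.sum_apply, Pi.smul_apply, smul_eq_mul] at this
      simp [hu, hb, this]
  -- swap-sum helper over ℚ
  have swapQ : ∀ (i : ι) (f : ι → ℚ),
      ∑ i', (∑ t, u i t * u i' t) * f i' = ∑ t, u i t * ∑ i', f i' * u i' t := by
    intro i f
    simp_rw [Finset.sum_mul, Finset.mul_sum]
    rw [Finset.sum_comm]
    exact Finset.sum_congr rfl fun t _ => Finset.sum_congr rfl fun i' _ => by ring
  have hdet : G.det ≠ 0 := by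
    intro h
    obtain ⟨c, hc0, hGc⟩ := Matrix.exists_mulVec_eq_zero_iff.mpr h
    set y : Fin (n + 1) → ℚ := fun t => ∑ i, c i * u i t with hy
    have hiy : ∀ i, ∑ t, u i t * y t = 0 := by
      intro i
      have h1 := congrFun hGc i
      simp only [Matrix.mulVec, dotProduct, hG, Matrix.of_apply, Pi.zero_apply] at h1
      simp only [hy]
      rw [← swapQ i c]
      exact h1
    have hyy : ∀ t, y t = 0 := by
      have hexp : ∀ t, y t * y t = ∑ i, c i * u i t * y t := by
        intro t
        calc y t * y t = (∑ i, c i * u i t) * y t := by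
              conv_lhs => rw [show y t = ∑ i, c i * u i t from by simp only [hy]]
          _ = ∑ i, c i * u i t * y t := Finset.sum_mul _ _ _
      have hsum : ∑ t, y t * y t = 0 := by
        have heq : ∑ t, y t * y t = ∑ i, c i * ∑ t, u i t * y t := by
          simp_rw [hexp]
          rw [Finset.sum_comm]
          simp_rw [Finset.mul_sum]
          exact Finset.sum_congr rfl fun i _ => Finset.sum_congr rfl fun t _ => by ring
        rw [heq]
        simp [hiy]
      intro t
      have := (Finset.sum_eq_zero_iff_of_nonneg
        (fun t _ => mul_self_nonneg (y t))).mp hsum t (Finset.mem_univ t)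
      exact mul_self_eq_zero.mp this
    have hczero : ∀ i, (c i : ℚ) = 0 := by
      have h0 : ∑ i, ((c i : ℚ) : ℝ) = 0 := by
        have h2 := hyy 0
        simp only [hy, hu, Fin.cons_zero, mul_one] at h2
        exact_mod_cast congrArg (fun x : ℚ => (x : ℝ)) h2
      have hj : ∀ j, ∑ i, ((c i : ℚ) : ℝ) * (zn i j : ℝ) = 0 := by
        intro j
        have h2 := hyy j.succ
        simp only [hy, hu, Fin.cons_succ] at h2
        exact_mod_cast congrArg (fun x : ℚ => (x : ℝ)) h2
      intro i
      exact_mod_cast hli (fun i => ((c i : ℚ) : ℝ)) h0 hj i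
    exact hc0 (funext hczero)
  set y0 : ι → ℚ := fun i => ∑ t, u i t * b t with hy0
  set q : ι → ℚ := G⁻¹.mulVec y0 with hq
  have hGq : G.mulVec q = y0 := by
    rw [hq, Matrix.mulVec_mulVec, Matrix.mul_nonsing_inv _ (isUnit_iff_ne_zero.mpr hdet),
      Matrix.one_mulVec]
  refine ⟨q, fun i => ?_⟩
  -- show that d := w - cast q is killed by the real Gram matrix
  set Gr : Matrix ι ι ℝ := G.map (fun x : ℚ => (x : ℝ)) with hGr
  have hdetr : Gr.det ≠ 0 := by
    rw [hGr]
    have h2 : (G.map (fun x : ℚ => (x : ℝ))) = (Rat.castHom ℝ).mapMatrix G := rfl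
    rw [h2, ← RingHom.map_det]
    simpa using hdet
  have hGd : Gr.mulVec (fun i => w i - (q i : ℝ)) = 0 := by
    funext i
    have hw : ∑ i', ((G i i' : ℚ) : ℝ) * w i' = ((y0 i : ℚ) : ℝ) := by
      have : ∑ i', ((G i i' : ℚ) : ℝ) * w i'
          = ∑ t, ((u i t : ℚ) : ℝ) * ∑ i', w i' * ((u i' t : ℚ) : ℝ) := by
        simp_rw [hG, Matrix.of_apply, Rat.cast_sum, Rat.cast_mul, Finset.sum_mul,
          Finset.mul_sum]
        rw [Finset.sum_comm]
        exact Finset.sum_congr rfl fun t _ => Finset.sum_congr rfl fun i' _ => by ring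
      rw [this]
      simp_rw [key]
      rw [hy0]
      push_cast
      rfl
    have hqr : ∑ i', ((G i i' : ℚ) : ℝ) * ((q i' : ℚ) : ℝ) = ((y0 i : ℚ) : ℝ) := by
      have := congrFun hGq i
      simp only [Matrix.mulVec, dotProduct] at this
      rw [← this]
      push_cast
      rfl
    simp only [Matrix.mulVec, dotProduct, hGr, Matrix.map_apply, Pi.zero_apply]
    simp_rw [mul_sub]
    rw [Finset.sum_sub_distrib, hw, hqr, sub_self]
  by_contra hne
  have : (fun i => w i - (q i : ℝ)) ≠ 0 := by
    intro h
    exact hne (by simpa [sub_eq_zero] using congrFun h i)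
  exact hdetr (Matrix.exists_mulVec_eq_zero_iff.mp ⟨_, this, hGd⟩)

namespace Stmt12Aux

variable {n : ℕ}

theorem Q_to_hull (E : Finset (Fin n → ℕ)) (v : Fin n → ℕ) (h : Q E v) :
    (fun j => (v j : ℝ)) ∈ convexHull ℝ
      (⋃ e ∈ E, {x : Fin n → ℝ | ∃ m : Fin n → ℕ, x = fun j => (e j : ℝ) + (m j : ℝ)}) := by
  classical
  obtain ⟨N, hN1, m, hmE, hmc, hle⟩ := h
  set l : List (Fin n → ℕ) := m.toList with hl
  have hlen : l.length = N := by rw [hl, Multiset.length_toList, hmc]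
  have hpos : 0 < l.length := by omega
  set i0 : Fin l.length := ⟨0, hpos⟩ with hi0
  set r : Fin n → ℕ := fun j => N * v j - (m.map (fun e => e j)).sum with hr
  set z : Fin l.length → (Fin n → ℝ) :=
    fun i => fun j => (l.get i j : ℝ) + (if i = i0 then (r j : ℝ) else 0) with hz
  have hzmem : ∀ i, z i ∈
      (⋃ e ∈ E, {x : Fin n → ℝ | ∃ m : Fin n → ℕ, x = fun j => (e j : ℝ) + (m j : ℝ)}) := by
    intro i
    have hgm : l.get i ∈ l := by simpa using List.get_mem l i.1 i.2
    have hmem : l.get i ∈ E := hmE _ ((Multiset.mem_toList).mp hgm)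
    refine Set.mem_iUnion₂.mpr ⟨l.get i, hmem, ⟨if i = i0 then r else 0, ?_⟩⟩
    funext j
    by_cases hii : i = i0 <;> simp [hz, hii]
  have hwpos : (0:ℝ) < ∑ _i : Fin l.length, (1:ℝ) := by
    rw [Finset.sum_const, Finset.card_univ, Fintype.card_fin, nsmul_eq_mul, mul_one]
    exact_mod_cast hpos
  have hmain := Finset.centerMass_mem_convexHull (Finset.univ : Finset (Fin l.length))
    (w := fun _ => (1 : ℝ)) (fun _ _ => zero_le_one) hwpos (fun i _ => hzmem i)
  have hNne : (N : ℝ) ≠ 0 := Nat.cast_ne_zero.mpr (by omega)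
  have hcm : Finset.univ.centerMass (fun _ : Fin l.length => (1:ℝ)) z
      = fun j => (v j : ℝ) := by
    rw [Finset.centerMass]
    simp only [one_smul, Finset.sum_const, Finset.card_univ, Fintype.card_fin, nsmul_eq_mul,
      mul_one]
    funext j
    rw [Pi.smul_apply, Finset.sum_apply, smul_eq_mul]
    have h1 : ∑ i : Fin l.length, ((l.get i j : ℕ) : ℝ)
        = (l.map (fun e => ((e j : ℕ) : ℝ))).sum := by
      simpa using Fin.sum_univ_fun_getElem l (fun e => ((e j : ℕ) : ℝ))
    have h2 : (((m.map (fun e => e j)).sum : ℕ) : ℝ) = (l.map (fun e => ((e j : ℕ) : ℝ))).sum := by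
      conv_lhs => rw [← Multiset.coe_toList m]
      rw [Multiset.map_coe, Multiset.sum_coe, Nat.cast_list_sum, List.map_map]
      rfl
    have hsum2 : ∑ i, z i j = (((m.map (fun e => e j)).sum : ℕ) : ℝ) + ((r j : ℕ) : ℝ) := by
      rw [hz]
      simp only []
      rw [Finset.sum_add_distrib]
      congr 1
      · rw [h1, h2]
      · rw [Finset.sum_ite_eq' Finset.univ i0]
        simp
    rw [hsum2]
    have h3 : (m.map (fun e => e j)).sum + r j = N * v j := by
      rw [hr]; exact Nat.add_sub_cancel' (hle j)
    have h4 : (((m.map (fun e => e j)).sum : ℕ) : ℝ) + ((r j : ℕ) : ℝ) = (N : ℝ) * (v j : ℝ) := by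
      rw [← Nat.cast_add, h3]; push_cast; ring
    rw [h4, hlen, inv_mul_cancel_left₀ hNne]
  rwa [hcm] at hmain

theorem hull_to_Q (E : Finset (Fin n → ℕ)) (v : Fin n → ℕ)
    (h : (fun j => (v j : ℝ)) ∈ convexHull ℝ
      (⋃ e ∈ E, {x : Fin n → ℝ | ∃ m : Fin n → ℕ, x = fun j => (e j : ℝ) + (m j : ℝ)})) :
    Q E v := by
  classical
  obtain ⟨ι, hfin, z, w, hrange, hAI, hpos, hsum1, hcomb⟩ :=
    eq_pos_convex_span_of_mem_convexHull h
  letI : Fintype ι := hfin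
  have hz : ∀ i : ι, ∃ en : Fin n → ℕ, ∃ mm : Fin n → ℕ, en ∈ E ∧
      z i = fun j => ((en j + mm j : ℕ) : ℝ) := by
    intro i
    have hmem := hrange (Set.mem_range_self i)
    rw [Set.mem_iUnion₂] at hmem
    obtain ⟨e, he, mm, hmm⟩ := hmem
    exact ⟨e, mm, he, by rw [hmm]; funext j; push_cast; ring⟩
  choose en mm hen hzi using hz
  set zn : ι → Fin n → ℕ := fun i j => en i j + mm i j with hzn
  have hzr : z = fun i => (fun j => (zn i j : ℝ)) := by
    funext i
    rw [hzi i]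
  rw [hzr] at hAI hcomb
  obtain ⟨q, hq⟩ := rat_weights zn v w hAI hsum1 hcomb
  have hqpos : ∀ i, 0 < q i := by
    intro i
    have h2 := hpos i
    rw [hq i] at h2
    exact_mod_cast h2
  set N : ℕ := ∏ i, (q i).den with hN
  have hN1 : 1 ≤ N := Finset.one_le_prod'' (fun i => (q i).den_pos)
  have hdvd : ∀ i, (q i).den ∣ N := fun i => Finset.dvd_prod_of_mem _ (Finset.mem_univ i)
  set c : ι → ℕ := fun i => (q i).num.toNat * (N / (q i).den) with hc
  have hcq : ∀ i, (c i : ℚ) = q i * N := by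
    intro i
    have hden0 : ((q i).den : ℚ) ≠ 0 := Nat.cast_ne_zero.mpr (q i).den_pos.ne'
    have hnn : 0 ≤ (q i).num := (Rat.num_pos.mpr (hqpos i)).le
    have hdiv : ((N / (q i).den : ℕ) : ℚ) = (N : ℚ) / ((q i).den : ℚ) :=
      Nat.cast_div (hdvd i) hden0
    calc (c i : ℚ) = ((q i).num : ℚ) * ((N / (q i).den : ℕ) : ℚ) := by
          have h5 : ((q i).num.toNat : ℚ) = ((q i).num : ℚ) := by
            exact_mod_cast congrArg (Int.cast : ℤ → ℚ) (Int.toNat_of_nonneg hnn)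
          rw [hc]
          push_cast [h5]
          try ring
      _ = (((q i).num : ℚ) / ((q i).den : ℚ)) * (N : ℚ) := by rw [hdiv]; ring
      _ = q i * N := by rw [Rat.num_div_den]
  -- sums over ℚ
  have hq1 : ∑ i, q i = 1 := by
    have h2 : ((∑ i, q i : ℚ) : ℝ) = ((1 : ℚ) : ℝ) := by
      push_cast
      rw [← hsum1]
      exact Finset.sum_congr rfl fun i _ => (hq i).symm
    exact_mod_cast h2
  have hqc : ∀ j, ∑ i, q i * (zn i j : ℚ) = (v j : ℚ) := by
    intro j
    have h2 := congrFun hcomb j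
    simp only [Finset.sum_apply, Pi.smul_apply, smul_eq_mul] at h2
    have h3 : ((∑ i, q i * (zn i j : ℚ) : ℚ) : ℝ) = (((v j : ℚ) : ℚ) : ℝ) := by
      push_cast
      rw [← h2]
      exact Finset.sum_congr rfl fun i _ => by rw [hq i]
    exact_mod_cast h3
  have hcsum : ∑ i, c i = N := by
    have h2 : ((∑ i, c i : ℕ) : ℚ) = ((N : ℕ) : ℚ) := by
      push_cast
      rw [Finset.sum_congr rfl fun i _ => hcq i, ← Finset.sum_mul, hq1, one_mul]
    exact_mod_cast h2
  have hcj : ∀ j, ∑ i, c i * zn i j = N * v j := by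
    intro j
    have h2 : ((∑ i, c i * zn i j : ℕ) : ℚ) = ((N * v j : ℕ) : ℚ) := by
      push_cast
      rw [Finset.sum_congr rfl fun i _ => by rw [hcq i]]
      rw [show ∑ i, q i * (N : ℚ) * (zn i j : ℚ) = (N : ℚ) * ∑ i, q i * (zn i j : ℚ) by
        rw [Finset.mul_sum]; exact Finset.sum_congr rfl fun i _ => by ring]
      rw [hqc j]
    exact_mod_cast h2
  -- build the multiset
  refine ⟨N, hN1, ∑ i, Multiset.replicate (c i) (en i), ?_, ?_, ?_⟩
  · intro x hx
    rw [Multiset.mem_sum] at hx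
    obtain ⟨i, _, hxi⟩ := hx
    rw [Multiset.eq_of_mem_replicate hxi]
    exact hen i
  · rw [show Multiset.card (∑ i, Multiset.replicate (c i) (en i)) = ∑ i, c i from ?_, hcsum]
    induction (Finset.univ : Finset ι) using Finset.cons_induction with
    | empty => simp
    | cons a s ha ih =>
        rw [Finset.sum_cons, Finset.sum_cons, Multiset.card_add, ih, Multiset.card_replicate]
  · intro j
    have hmap : (Multiset.map (fun e => e j) (∑ i, Multiset.replicate (c i) (en i))).sum
        = ∑ i, c i * en i j := by
      induction (Finset.univ : Finset ι) using Finset.cons_induction with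
      | empty => simp
      | cons a s ha ih =>
          rw [Finset.sum_cons, Finset.sum_cons, Multiset.map_add, Multiset.sum_add, ih,
            Multiset.map_replicate, Multiset.sum_replicate, smul_eq_mul]
    rw [hmap, ← hcj j]
    refine Finset.sum_le_sum fun i _ => ?_
    exact Nat.mul_le_mul_left _ (by rw [hzn]; exact Nat.le_add_right _ _)

end Stmt12Aux

/-- Let `k` be a field, `E` a nonempty finite subset of `ℕ^n`, and `𝔞`
the ideal of `k[x_1, …, x_n]` generated by the monomials `x^e`, `e ∈ E`.  Then for
`v ∈ ℕ^n` the following are equivalent: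
(i) the monomial `x^v` is integral over `𝔞`, i.e. there exist `N ≥ 1` and polynomials
`a_1, …, a_N` with `a_i ∈ 𝔞^i` and `(x^v)^N + Σ_{i=1}^N a_i (x^v)^{N−i} = 0`;
(ii) `v ∈ convexHull (⋃_{e ∈ E} (e + ℕ^n))`, the convex hull taken in `ℝ^n`. -/
theorem stmt_12 {n : ℕ} {k : Type*} [Field k]
    (E : Finset (Fin n → ℕ)) (hEne : E.Nonempty)
    (𝔞 : Ideal (MvPolynomial (Fin n) k))
    (h𝔞 : 𝔞 = Ideal.span ((fun e : Fin n → ℕ => MvPolynomial.monomial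
      (Finsupp.equivFunOnFinite.symm e) (1 : k)) '' (E : Set (Fin n → ℕ))))
    (v : Fin n → ℕ) :
    (∃ N : ℕ, 1 ≤ N ∧ ∃ a : ℕ → MvPolynomial (Fin n) k,
        (∀ i, 1 ≤ i → i ≤ N → a i ∈ 𝔞 ^ i) ∧
        (MvPolynomial.monomial (Finsupp.equivFunOnFinite.symm v) (1 : k)) ^ N +
          ∑ i ∈ Finset.Icc 1 N,
            a i * (MvPolynomial.monomial (Finsupp.equivFunOnFinite.symm v) (1 : k)) ^ (N - i)
          = 0) ↔
      (fun j => (v j : ℝ)) ∈ convexHull ℝ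
        (⋃ e ∈ E, {x : Fin n → ℝ | ∃ m : Fin n → ℕ, x = fun j => (e j : ℝ) + (m j : ℝ)}) := by
  subst h𝔞
  constructor
  · intro h
    exact Stmt12Aux.Q_to_hull E v (Stmt12Aux.ex_to_Q E v h)
  · intro h
    exact Stmt12Aux.Q_to_ex E v (Stmt12Aux.hull_to_Q E v h)
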